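/- If (X, d) is a metric space such that for every compact set C ⊆ X and every r > 0 the closure of C + r is compact (equivalently, X is a proper metric space), then the space H(X) of nonempty compact subsets of X with the Hausdorff metric has the same property: for every compact set 𝒞 ⊆ H(X) and every r > 0, the closure of 𝒞 + r (taken in the Hausdorff metric) is compact. -/

import Mathlib

open Metric TopologicalSpace Set

/-- The set `S + r = {y : ∃ x ∈ S, d(x,y) < r}`. -/
def plusSet {Y : Type*} [MetricSpace Y] (S : Set Y) (r : ℝ) : Set Y :=
  {y | ∃ x ∈ S, dist x y < r}

/-- From the hypothesis we get that `X` is proper. -/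
lemma properSpace_of_plusSet {X : Type*} [MetricSpace X]
    (hX : ∀ C : Set X, IsCompact C → ∀ r : ℝ, 0 < r → IsCompact (closure (plusSet C r))) :
    ProperSpace X := by
  constructor
  intro x R
  rcases le_or_gt R 0 with hR | hR
  · rcases lt_or_eq_of_le hR with h | h
    · simpa [Metric.closedBall_eq_empty.2 h] using isCompact_empty
    · simp [h, Metric.closedBall_zero]
  · have h := hX {x} isCompact_singleton (R + 1) (by linarith)
    refine h.of_isClosed_subset Metric.isClosed_closedBall (subset_trans ?_ subset_closure)
    intro y hy
    exact ⟨x, rfl, lt_of_le_of_lt (Metric.mem_closedBall'.1 hy) (by linarith)⟩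

/-- The set of nonempty compact subsets of a compact set `M` is compact in the hyperspace. -/
lemma isCompact_setOf_subset {X : Type*} [MetricSpace X] {M : Set X} (hM : IsCompact M) :
    IsCompact {K : NonemptyCompacts X | (K : Set X) ⊆ M} := by
  haveI : CompactSpace M := isCompact_iff_compactSpace.1 hM
  -- the image map from `NonemptyCompacts M`
  let f : NonemptyCompacts M → NonemptyCompacts X := fun K =>
    ⟨⟨Subtype.val '' (K : Set M), K.isCompact.image continuous_subtype_val⟩,
      K.nonempty.image _⟩
  have hf : Continuous f := by
    have : Isometry f := by
      intro K L
      have : edist (f K) (f L) = Metric.hausdorffEDist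
          (Subtype.val '' (K : Set M)) (Subtype.val '' (L : Set M)) := rfl
      rw [this, EMetric.hausdorffEdist_image isometry_subtype_coe]
      rfl
    exact this.continuous
  have : {K : NonemptyCompacts X | (K : Set X) ⊆ M} = Set.range f := by
    ext K
    constructor
    · intro hK
      have hKc : IsCompact (Subtype.val ⁻¹' (K : Set X) : Set M) := by
        rw [Topology.IsEmbedding.isCompact_iff Topology.IsEmbedding.subtypeVal,
          Subtype.image_preimage_coe, Set.inter_eq_right.2 hK]
        exact K.isCompact
      have hKn : (Subtype.val ⁻¹' (K : Set X) : Set M).Nonempty := by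
        rcases K.nonempty with ⟨x, hx⟩
        exact ⟨⟨x, hK hx⟩, hx⟩
      refine ⟨⟨⟨_, hKc⟩, hKn⟩, ?_⟩
      apply TopologicalSpace.NonemptyCompacts.ext
      show Subtype.val '' (Subtype.val ⁻¹' (K : Set X)) = (K : Set X)
      rw [Subtype.image_preimage_coe, Set.inter_eq_right.2 hK]
    · rintro ⟨L, rfl⟩
      rintro x ⟨y, _, rfl⟩
      exact y.2
  rw [this]
  exact isCompact_range hf

/-- If `(X, d)` is a metric space such that for every compact `C ⊆ X`
and every `r : ℝ` the closure of `C + r` is compact, then the space of nonempty compact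
subsets of `X` with the Hausdorff metric has the same property. -/
theorem nonemptyCompacts_locally_compact_of_locally_compact
    {X : Type*} [MetricSpace X]
    (hX : ∀ C : Set X, IsCompact C → ∀ r : ℝ, 0 < r → IsCompact (closure (plusSet C r))) :
    ∀ 𝒞 : Set (TopologicalSpace.NonemptyCompacts X), IsCompact 𝒞 → ∀ r : ℝ, 0 < r →
      IsCompact (closure (plusSet 𝒞 r)) := by
  haveI : ProperSpace X := properSpace_of_plusSet hX
  intro 𝒞 h𝒞 r hr
  rcases 𝒞.eq_empty_or_nonempty with rfl | ⟨C₀, hC₀⟩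
  · simp [plusSet]
  -- `𝒞` is bounded, so contained in a closed ball around `C₀`
  obtain ⟨R, hR⟩ : ∃ R, ∀ C ∈ 𝒞, dist C₀ C ≤ R := by
    rcases h𝒞.isBounded.subset_closedBall C₀ with ⟨R, hR⟩
    exact ⟨R, fun C hC => by simpa [dist_comm] using hR hC⟩
  have hR0 : 0 ≤ R := le_trans dist_nonneg (hR C₀ hC₀)
  set M : Set X := Metric.cthickening (R + r) (C₀ : Set X) with hM
  have hMc : IsCompact M := C₀.isCompact.cthickening
  have key : plusSet 𝒞 r ⊆ {K : NonemptyCompacts X | (K : Set X) ⊆ M} := by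
    rintro D ⟨C, hC, hCD⟩
    have h1 : dist C₀ D ≤ R + r :=
      le_trans (dist_triangle C₀ C D) (by linarith [hR C hC, le_of_lt hCD])
    intro x hx
    have hne : EMetric.hausdorffEdist (D : Set X) (C₀ : Set X) ≠ ⊤ :=
      Metric.hausdorffEdist_ne_top_of_nonempty_of_bounded D.nonempty C₀.nonempty
        D.isCompact.isBounded C₀.isCompact.isBounded
    have h2 : Metric.infDist x (C₀ : Set X) ≤ R + r := by
      refine le_trans (Metric.infDist_le_hausdorffDist_of_mem hx hne) ?_
      rw [Metric.hausdorffDist_comm, ← Metric.NonemptyCompacts.dist_eq]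
      exact h1
    rw [Metric.mem_cthickening_iff]
    have hne' : Metric.infEDist x (C₀ : Set X) ≠ ⊤ :=
      Metric.infEdist_ne_top C₀.nonempty
    rw [ENNReal.le_ofReal_iff_toReal_le hne' (by linarith)]
    exact h2
  have hclosed : IsClosed {K : NonemptyCompacts X | (K : Set X) ⊆ M} :=
    (isCompact_setOf_subset hMc).isClosed
  exact (isCompact_setOf_subset hMc).of_isClosed_subset isClosed_closure
    (closure_minimal key hclosed)
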